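/- Fix a₃, b₃₂ ∈ ℝ with b₃₂ ≠ 0 and a₃ ≠ 0, take a₂ = 1, and let j ∈ ℝ with j ≠ 0. There exist ω₁, ω₂, ω₃ ∈ ℝ satisfying the four equations ω₁ + ω₂ + ω₃ = j, ω₂ * a₂ + ω₃ * a₃ = j/2, ω₂ * a₂^2 + ω₃ * a₃^2 = j/3, and ω₂ * b₃₂ * a₂ = j/6 if and only if a₃ − a₂ = (3*a₃ − 3*a₂ + 1) * b₃₂ (equivalently, a₃ − 1 = (3*a₃ − 2) * b₃₂). -/

import Mathlib

/-- Scaled Runge–Kutta 34 order conditions (Eq. 20/21 of "Catch-Up Distillation", Appendix D),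
specialized to `a₂ = 1`: for fixed nodes with `b₃₂ ≠ 0`, `a₃ ≠ 0`, and any `j ≠ 0`, weights
`ω₁, ω₂, ω₃` satisfying `ω₁ + ω₂ + ω₃ = j`, `ω₂ a₂ + ω₃ a₃ = j/2`, `ω₂ a₂² + ω₃ a₃² = j/3`,
`ω₂ b₃₂ a₂ = j/6` exist iff `a₃ - a₂ = (3a₃ - 3a₂ + 1) b₃₂`. -/
theorem runge_kutta_34_order_conditions (a₂ a₃ b₃₂ j : ℝ)
    (ha₂ : a₂ = 1) (hb : b₃₂ ≠ 0) (ha : a₃ ≠ 0) (hj : j ≠ 0) :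
    (∃ ω₁ ω₂ ω₃ : ℝ,
        ω₁ + ω₂ + ω₃ = j ∧
        ω₂ * a₂ + ω₃ * a₃ = j/2 ∧
        ω₂ * a₂^2 + ω₃ * a₃^2 = j/3 ∧
        ω₂ * b₃₂ * a₂ = j/6)
      ↔ a₃ - a₂ = (3*a₃ - 3*a₂ + 1) * b₃₂ := by
  subst ha₂
  constructor
  · rintro ⟨ω₁, ω₂, ω₃, h1, h2, h3, h4⟩
    have key : ω₃ * a₃ * (a₃ - 1) = -(j/6) := by nlinarith [h2, h3]
    have ha1 : a₃ - 1 ≠ 0 := by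
      intro h
      rw [h, mul_zero] at key
      have : j = 0 := by linarith
      exact hj this
    have hω₂ : ω₂ = j / (6 * b₃₂) := by
      field_simp at h4 ⊢
      linarith
    have hω₃ : ω₃ = -(j/6) / (a₃ * (a₃ - 1)) := by
      field_simp
      nlinarith [key]
    rw [hω₂, hω₃] at h2
    field_simp at h2
    have h2' : j * a₃ * ((a₃ - 1) - (3*a₃ - 2)*b₃₂) = 0 := by linear_combination (j * a₃ / 2) * h2
    rcases mul_eq_zero.mp h2' with h | h
    · exact absurd h (mul_ne_zero hj ha)
    · linarith
  · intro h
    have ha1 : a₃ - 1 ≠ 0 := by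
      intro h'
      have ha3 : a₃ = 1 := by linarith
      rw [ha3] at h
      apply hb
      linarith
    refine ⟨j - j/(6*b₃₂) - (-(j/6) / (a₃ * (a₃ - 1))), j/(6*b₃₂), -(j/6) / (a₃ * (a₃ - 1)), by ring, ?_, ?_, by field_simp⟩
    · field_simp
      linear_combination 2 * h
    · field_simp
      linear_combination 3 * h
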